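/- For every n ≥ 5: (a) J̃'(n−1,2) ∪ X_3^- = {e_i + e_j : 1 ≤ i < j ≤ n}, the representation J̃(n,2) of the Johnson graph J(n,2) in ℝ^n; and (b) there exists a Euclidean isometry of ℝ^n mapping J̃'(n−1,2) ∪ X_3^+ onto {e_i + e_j : 1 ≤ i < j ≤ n}, so that J̃'(n−1,2) ∪ X_3^+ is congruent to J̃(n,2). -/

import Mathlib

noncomputable section

/-- The set of distances between distinct points of `S`. -/
def distSet {n : ℕ} (S : Set (EuclideanSpace ℝ (Fin n))) : Set ℝ :=
  {d | ∃ x ∈ S, ∃ y ∈ S, x ≠ y ∧ d = dist x y}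

/-- `S` is an `s`-distance set: exactly `s` distances occur between distinct points. -/
def IsSDistanceSet {n : ℕ} (s : ℕ) (S : Set (EuclideanSpace ℝ (Fin n))) : Prop :=
  (distSet S).Finite ∧ (distSet S).ncard = s

/-- The representation `J̃'(n-1,2) = {eᵢ + eⱼ : 1 ≤ i < j ≤ n-1}` of the Johnson graph
`J(n-1,2)` inside `ℝⁿ` (0-based: indices `< n-1`, i.e. all but the last coordinate). -/
def JohnsonRep' (n : ℕ) : Set (EuclideanSpace ℝ (Fin n)) :=
  {x | ∃ i j : Fin n, (i : ℕ) < (j : ℕ) ∧ (j : ℕ) < n - 1 ∧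
    x = EuclideanSpace.single i 1 + EuclideanSpace.single j 1}

/-- The hyperplane `H = {x ∈ ℝⁿ : ∑ xᵢ = 2}`. -/
def Hyp2 (n : ℕ) : Set (EuclideanSpace ℝ (Fin n)) :=
  {x | ∑ i, x i = (2 : ℝ)}

/-- `X₃^ε` (for `ε = ±1`): the `n-1` vectors `((n±1)/(n-1), ((1±1)/(n-1))^{n-2}, ∓1)^{P'}`,
i.e. among the first `n-1` coordinates one equals `(n+ε)/(n-1)` and `n-2` equal
`(1+ε)/(n-1)`, and the last coordinate equals `-ε`. -/
def X3set (n : ℕ) (ε : ℝ) : Set (EuclideanSpace ℝ (Fin n)) :=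
  {x | {i : Fin n | (i : ℕ) < n - 1 ∧ x i = ((n : ℝ) + ε) / ((n : ℝ) - 1)}.ncard = 1 ∧
    {i : Fin n | (i : ℕ) < n - 1 ∧ x i = (1 + ε) / ((n : ℝ) - 1)}.ncard = n - 2 ∧
    (∀ i : Fin n, (i : ℕ) = n - 1 → x i = -ε)}

/-- The representation `J̃(n,2) = {eᵢ + eⱼ : 1 ≤ i < j ≤ n}` in `ℝⁿ`. -/
def J2full (n : ℕ) : Set (EuclideanSpace ℝ (Fin n)) :=
  {x | ∃ i j : Fin n, (i : ℕ) < (j : ℕ) ∧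
    x = EuclideanSpace.single i 1 + EuclideanSpace.single j 1}

open RealInnerProductSpace

section ReflAux
variable {E : Type*} [NormedAddCommGroup E] [InnerProductSpace ℝ E]

noncomputable def reflMap (v : E) (a : ℝ) (x : E) : E :=
  x - ((2 * (⟪v, x⟫ - a)) / ⟪v, v⟫) • v

lemma inner_reflMap (v : E) (hv : v ≠ 0) (a : ℝ) (x : E) :
    ⟪v, reflMap v a x⟫ = 2 * a - ⟪v, x⟫ := by
  have h : ⟪v, v⟫ ≠ 0 := inner_self_ne_zero.2 hv
  simp only [reflMap, inner_sub_right, real_inner_smul_right]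
  field_simp
  ring

lemma reflMap_invol (v : E) (hv : v ≠ 0) (a : ℝ) (x : E) :
    reflMap v a (reflMap v a x) = x := by
  have h : ⟪v, v⟫ ≠ 0 := inner_self_ne_zero.2 hv
  rw [reflMap, inner_reflMap v hv, reflMap]
  have : (2 * (2 * a - ⟪v, x⟫ - a)) / ⟪v, v⟫ = - ((2 * (⟪v, x⟫ - a)) / ⟪v, v⟫) := by
    field_simp; ring
  rw [this, neg_smul, sub_neg_eq_add, sub_add_cancel]

lemma reflMap_norm (v : E) (hv : v ≠ 0) (a : ℝ) (x y : E) :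
    ‖reflMap v a x - reflMap v a y‖ = ‖x - y‖ := by
  have h : ⟪v, v⟫ ≠ 0 := inner_self_ne_zero.2 hv
  have hd : reflMap v a x - reflMap v a y
      = (x - y) - ((2 * ⟪v, x - y⟫) / ⟪v, v⟫) • v := by
    simp only [reflMap, inner_sub_right]
    have : (2 * (⟪v, x⟫ - ⟪v, y⟫)) / ⟪v, v⟫
        = (2 * (⟪v, x⟫ - a)) / ⟪v, v⟫ - (2 * (⟪v, y⟫ - a)) / ⟪v, v⟫ := by
      field_simp; ring
    rw [this, sub_smul]
    abel
  rw [hd]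
  have hsq : ‖(x - y) - ((2 * ⟪v, x - y⟫) / ⟪v, v⟫) • v‖ ^ 2 = ‖x - y‖ ^ 2 := by
    rw [norm_sub_sq_real, real_inner_smul_right, norm_smul, mul_pow]
    rw [real_inner_self_eq_norm_sq] at h ⊢
    rw [Real.norm_eq_abs, sq_abs, real_inner_comm (x - y) v]
    field_simp
    ring
  have h1 : (0:ℝ) ≤ ‖(x - y) - ((2 * ⟪v, x - y⟫) / ⟪v, v⟫) • v‖ := norm_nonneg _
  have h2 : (0:ℝ) ≤ ‖x - y‖ := norm_nonneg _
  nlinarith [hsq]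

noncomputable def reflIso (v : E) (hv : v ≠ 0) (a : ℝ) : E ≃ᵢ E where
  toFun := reflMap v a
  invFun := reflMap v a
  left_inv := reflMap_invol v hv a
  right_inv := reflMap_invol v hv a
  isometry_toFun := Isometry.of_dist_eq fun x y => by
    simp only [dist_eq_norm]; exact reflMap_norm v hv a x y

lemma reflIso_apply (v : E) (hv : v ≠ 0) (a : ℝ) (x : E) :
    reflIso v hv a x = reflMap v a x := rfl

lemma reflMap_fixed (v : E) (a : ℝ) (x : E) (hx : ⟪v, x⟫ = a) : reflMap v a x = x := by
  simp [reflMap, hx]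

lemma reflMap_eq_sub (v : E) (hv : v ≠ 0) (a : ℝ) (x : E)
    (hx : ⟪v, x⟫ - a = ⟪v, v⟫ / 2) : reflMap v a x = x - v := by
  have h : ⟪v, v⟫ ≠ 0 := inner_self_ne_zero.2 hv
  rw [reflMap, hx]
  have : (2 * (⟪v, v⟫ / 2)) / ⟪v, v⟫ = 1 := by field_simp
  rw [this, one_smul]

end ReflAux

noncomputable def vvec (n : ℕ) : EuclideanSpace ℝ (Fin n) :=
  WithLp.toLp 2 fun k => if (k : ℕ) < n - 1 then 2 / ((n:ℝ) - 1) else -2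

noncomputable def wvec (n : ℕ) (ε : ℝ) (i : Fin n) : EuclideanSpace ℝ (Fin n) :=
  WithLp.toLp 2 fun k => if (k : ℕ) < n - 1 then
    (if k = i then ((n:ℝ) + ε) / ((n:ℝ) - 1) else (1 + ε) / ((n:ℝ) - 1)) else -ε

lemma hn1R (n : ℕ) (hn : 5 ≤ n) : ((n:ℝ) - 1) ≠ 0 := by
  have : (5:ℝ) ≤ n := by exact_mod_cast hn
  linarith

lemma filter_card (n : ℕ) (hn : 5 ≤ n) :
    (Finset.univ.filter (fun k : Fin n => (k : ℕ) < n - 1)).card = n - 1 := by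
  have h : (Finset.univ.filter (fun k : Fin n => (k : ℕ) < n - 1))
      = Finset.univ.erase ⟨n - 1, by omega⟩ := by
    ext k
    simp only [Finset.mem_filter, Finset.mem_univ, true_and, Finset.mem_erase, and_true]
    constructor
    · intro h he; rw [he] at h; simp at h
    · intro h
      have := k.isLt
      rcases lt_or_eq_of_le (Nat.le_of_lt_succ (by omega : (k:ℕ) < (n-1)+1)) with h'|h'
      · exact h'
      · exact absurd (Fin.ext h') h
  rw [h, Finset.card_erase_of_mem (Finset.mem_univ _), Finset.card_univ, Fintype.card_fin]

lemma filter_not_eq (n : ℕ) (hn : 5 ≤ n) :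
    Finset.univ.filter (fun k : Fin n => ¬ (k:ℕ) < n - 1) = {(⟨n-1, by omega⟩ : Fin n)} := by
  ext k
  simp only [Finset.mem_filter, Finset.mem_univ, true_and, Finset.mem_singleton]
  constructor
  · intro h; have := k.isLt; apply Fin.ext; simp only [Fin.val_mk]; omega
  · intro h; rw [h]; simp

lemma sum_split (n : ℕ) (hn : 5 ≤ n) (g : Fin n → ℝ) :
    ∑ k, g k = (∑ k ∈ Finset.univ.filter (fun k : Fin n => (k:ℕ) < n - 1), g k)
      + g ⟨n-1, by omega⟩ := by
  rw [← Finset.sum_filter_add_sum_filter_not Finset.univ (fun k : Fin n => (k:ℕ) < n - 1) g,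
    filter_not_eq n hn, Finset.sum_singleton]

lemma inner_vv (n : ℕ) (hn : 5 ≤ n) : ⟪vvec n, vvec n⟫ = 4 * n / ((n:ℝ) - 1) := by
  have hn1 := hn1R n hn
  rw [show (⟪vvec n, vvec n⟫ : ℝ) = ∑ k, vvec n k * vvec n k from by
    rw [PiLp.inner_apply]; simp [mul_comm, sq]]
  rw [sum_split n hn]
  have hc : ∀ k ∈ Finset.univ.filter (fun k : Fin n => (k:ℕ) < n - 1),
      vvec n k * vvec n k = 2 / ((n:ℝ)-1) * (2 / ((n:ℝ)-1)) := fun k hk => by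
    simp only [Finset.mem_filter] at hk
    simp [vvec, hk.2]
  rw [Finset.sum_congr rfl hc, Finset.sum_const, filter_card n hn, nsmul_eq_mul]
  rw [show vvec n ⟨n-1, by omega⟩ = -2 from by simp [vvec]]
  push_cast [Nat.cast_sub (by omega : 1 ≤ n)]
  field_simp
  ring

lemma inner_v_single (n : ℕ) (i j : Fin n) :
    ⟪vvec n, EuclideanSpace.single i (1:ℝ) + EuclideanSpace.single j 1⟫
      = vvec n i + vvec n j := by
  rw [inner_add_right, EuclideanSpace.inner_single_right, EuclideanSpace.inner_single_right]
  simp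

lemma inner_vw (n : ℕ) (hn : 5 ≤ n) (i : Fin n) (hi : (i:ℕ) < n - 1) :
    ⟪vvec n, wvec n 1 i⟫ = 6 / ((n:ℝ) - 1) + 2 := by
  have hn1 := hn1R n hn
  rw [show (⟪vvec n, wvec n 1 i⟫ : ℝ) = ∑ k, vvec n k * wvec n 1 i k from by
    rw [PiLp.inner_apply]; simp [mul_comm]]
  rw [sum_split n hn]
  set S := Finset.univ.filter (fun k : Fin n => (k:ℕ) < n - 1) with hS
  have hiS : i ∈ S := by simp [hS, hi]
  have hc : ∀ k ∈ S, vvec n k * wvec n 1 i k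
      = (if k = i then 2 / ((n:ℝ)-1) * (((n:ℝ)+1)/((n:ℝ)-1)) - 2 / ((n:ℝ)-1) * (2/((n:ℝ)-1)) else 0)
        + 2 / ((n:ℝ)-1) * (2/((n:ℝ)-1)) := fun k hk => by
    simp only [hS, Finset.mem_filter] at hk
    by_cases h : k = i
    · simp [vvec, wvec, hk.2, h, hi]
    · simp [vvec, wvec, hk.2, h]; norm_num
  rw [Finset.sum_congr rfl hc, Finset.sum_add_distrib, Finset.sum_ite_eq' S i, if_pos hiS,
    Finset.sum_const,
    show S.card = n - 1 from by rw [hS]; exact filter_card n hn, nsmul_eq_mul]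
  rw [show vvec n ⟨n-1, by omega⟩ = -2 from by simp [vvec],
    show wvec n 1 i ⟨n-1, by omega⟩ = -1 from by simp [wvec]]
  push_cast [Nat.cast_sub (by omega : 1 ≤ n)]
  field_simp
  ring

lemma Sset_ncard (n : ℕ) (hn : 5 ≤ n) :
    {k : Fin n | (k:ℕ) < n - 1}.ncard = n - 1 := by
  have h : {k : Fin n | (k:ℕ) < n - 1}
      = ↑(Finset.univ.filter (fun k : Fin n => (k:ℕ) < n - 1)) := by
    ext k; simp
  rw [h, Set.ncard_coe_finset, filter_card n hn]

lemma big_ne_small (n : ℕ) (hn : 5 ≤ n) (ε : ℝ) :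
    ((n:ℝ) + ε) / ((n:ℝ) - 1) ≠ (1 + ε) / ((n:ℝ) - 1) := by
  have hn1 := hn1R n hn
  have h5 : (5:ℝ) ≤ n := by exact_mod_cast hn
  intro h
  rw [div_eq_div_iff hn1 hn1] at h
  nlinarith

lemma X3_char (n : ℕ) (hn : 5 ≤ n) (ε : ℝ) (x : EuclideanSpace ℝ (Fin n)) :
    x ∈ X3set n ε ↔ ∃ i : Fin n, (i:ℕ) < n - 1 ∧ x = wvec n ε i := by
  have hbs := big_ne_small n hn ε
  constructor
  · rintro ⟨h1, h2, h3⟩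
    set A := {k : Fin n | (k:ℕ) < n - 1 ∧ x k = ((n:ℝ) + ε) / ((n:ℝ) - 1)} with hAdef
    set B := {k : Fin n | (k:ℕ) < n - 1 ∧ x k = (1 + ε) / ((n:ℝ) - 1)} with hBdef
    obtain ⟨i, hA⟩ := Set.ncard_eq_one.mp h1
    have hiA : i ∈ A := by rw [hA]; exact rfl
    have hdisj : Disjoint A B := by
      rw [Set.disjoint_left]
      rintro k ⟨_, hk1⟩ ⟨_, hk2⟩
      exact hbs (hk1.symm.trans hk2)
    have hsub : A ∪ B ⊆ {k : Fin n | (k:ℕ) < n - 1} := by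
      rintro k (⟨hk, _⟩ | ⟨hk, _⟩) <;> exact hk
    have hcard : (A ∪ B).ncard = n - 1 := by
      rw [Set.ncard_union_eq hdisj A.toFinite B.toFinite, h1, h2]; omega
    have huniv : A ∪ B = {k : Fin n | (k:ℕ) < n - 1} :=
      Set.eq_of_subset_of_ncard_le hsub
        (by rw [hcard, Sset_ncard n hn]) (Set.toFinite _)
    refine ⟨i, hiA.1, ?_⟩
    ext k
    by_cases hk : (k:ℕ) < n - 1
    · have hk' : k ∈ A ∪ B := huniv.symm ▸ hk
      rcases hk' with hA' | hB'
      · have hki : k = i := by rw [hA] at hA'; exact hA'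
        subst hki
        simp only [wvec, if_pos hk, if_pos rfl]
        exact hA'.2
      · have hki : k ≠ i := by
          intro h; subst h
          exact hbs (hiA.2 ▸ hB'.2 ▸ rfl)
        simp only [wvec, if_pos hk, if_neg hki]
        exact hB'.2
    · have hk' : (k:ℕ) = n - 1 := by have := k.isLt; omega
      rw [h3 k hk']
      simp [wvec, hk]
  · rintro ⟨i, hi, rfl⟩
    refine ⟨?_, ?_, ?_⟩
    · have : {k : Fin n | (k:ℕ) < n - 1 ∧ wvec n ε i k = ((n:ℝ) + ε) / ((n:ℝ) - 1)}
          = {i} := by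
        ext k
        simp only [Set.mem_setOf_eq, Set.mem_singleton_iff]
        constructor
        · rintro ⟨hk, hval⟩
          by_contra hki
          rw [show wvec n ε i k = (1 + ε) / ((n:ℝ) - 1) from by
            simp [wvec, hk, hki]] at hval
          exact hbs hval.symm
        · intro hki
          subst hki
          exact ⟨hi, by simp [wvec, hi]⟩
      rw [this, Set.ncard_singleton]
    · have : {k : Fin n | (k:ℕ) < n - 1 ∧ wvec n ε i k = (1 + ε) / ((n:ℝ) - 1)}
          = {k : Fin n | (k:ℕ) < n - 1} \ {i} := by
        ext k
        simp only [Set.mem_setOf_eq, Set.mem_diff, Set.mem_singleton_iff]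
        constructor
        · rintro ⟨hk, hval⟩
          refine ⟨hk, ?_⟩
          intro hki
          subst hki
          rw [show wvec n ε k k = ((n:ℝ) + ε) / ((n:ℝ) - 1) from by
            simp [wvec, hk]] at hval
          exact hbs hval
        · rintro ⟨hk, hki⟩
          exact ⟨hk, by simp [wvec, hk, hki]⟩
      rw [this, Set.ncard_diff_singleton_of_mem
        (show i ∈ {k : Fin n | (k:ℕ) < n - 1} from hi), Sset_ncard n hn]
      omega
    · intro k hk
      have : ¬ (k:ℕ) < n - 1 := by omega
      simp [wvec, this]

lemma wvec_neg1 (n : ℕ) (hn : 5 ≤ n) (i : Fin n) (hi : (i:ℕ) < n - 1) :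
    wvec n (-1) i
      = EuclideanSpace.single i (1:ℝ) + EuclideanSpace.single (⟨n-1, by omega⟩ : Fin n) 1 := by
  have hn1 := hn1R n hn
  ext k
  simp only [PiLp.add_apply, EuclideanSpace.single_apply]
  by_cases hk : (k:ℕ) < n - 1
  · have hkl : k ≠ (⟨n-1, by omega⟩ : Fin n) := by
      intro h; rw [h] at hk; simp at hk
    by_cases hki : k = i
    · simp only [wvec, if_pos hk, if_pos hki, if_neg hkl, if_pos hki]
      field_simp
      ring
    · simp only [wvec, if_pos hk, if_neg hki, if_neg hkl]
      norm_num
  · have hkl : k = (⟨n-1, by omega⟩ : Fin n) := by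
      apply Fin.ext; simp only [Fin.val_mk]; have := k.isLt; omega
    have hki : k ≠ i := by intro h; rw [h] at hk; exact hk hi
    simp only [wvec, if_neg hk, if_neg hki, if_pos hkl]
    norm_num

lemma wvec_sub (n : ℕ) (hn : 5 ≤ n) (i : Fin n) (hi : (i:ℕ) < n - 1) :
    wvec n 1 i - vvec n = wvec n (-1) i := by
  have hn1 := hn1R n hn
  ext k
  have : (wvec n 1 i - vvec n) k = wvec n 1 i k - vvec n k := rfl
  rw [this]
  by_cases hk : (k:ℕ) < n - 1
  · by_cases hki : k = i
    · simp only [wvec, vvec, if_pos hk, if_pos hki]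
      field_simp
      ring
    · simp only [wvec, vvec, if_pos hk, if_neg hki]
      field_simp
      norm_num
  · simp only [wvec, vvec, if_neg hk]
    norm_num

theorem X3_union_is_johnson (n : ℕ) (hn : 5 ≤ n) :
    JohnsonRep' n ∪ X3set n (-1) = J2full n ∧
    ∃ f : EuclideanSpace ℝ (Fin n) ≃ᵢ EuclideanSpace ℝ (Fin n),
      f '' (JohnsonRep' n ∪ X3set n 1) = J2full n := by
  have hn1 := hn1R n hn
  have hlst : ((⟨n-1, by omega⟩ : Fin n) : ℕ) = n - 1 := rfl
  -- Part (a)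
  have hXm : X3set n (-1) = {x : EuclideanSpace ℝ (Fin n) | ∃ i : Fin n, (i:ℕ) < n - 1 ∧
      x = EuclideanSpace.single i 1 + EuclideanSpace.single (⟨n-1, by omega⟩ : Fin n) 1} := by
    ext x
    rw [Set.mem_setOf_eq, X3_char n hn]
    constructor
    · rintro ⟨i, hi, rfl⟩
      exact ⟨i, hi, wvec_neg1 n hn i hi⟩
    · rintro ⟨i, hi, rfl⟩
      exact ⟨i, hi, (wvec_neg1 n hn i hi).symm⟩
  have ha : JohnsonRep' n ∪ X3set n (-1) = J2full n := by
    ext x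
    constructor
    · rintro (⟨i, j, hij, hjn, rfl⟩ | hx)
      · exact ⟨i, j, hij, rfl⟩
      · rw [hXm] at hx
        obtain ⟨i, hi, rfl⟩ := hx
        exact ⟨i, ⟨n-1, by omega⟩, by rw [hlst]; exact hi, rfl⟩
    · rintro ⟨i, j, hij, rfl⟩
      by_cases hj : (j:ℕ) < n - 1
      · exact Or.inl ⟨i, j, hij, hj, rfl⟩
      · have hj' : (j:ℕ) = n - 1 := by have := j.isLt; omega
        have hjl : j = (⟨n-1, by omega⟩ : Fin n) := Fin.ext (by rw [hlst, hj'])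
        right
        rw [hXm]
        exact ⟨i, by omega, by rw [hjl]⟩
  refine ⟨ha, ?_⟩
  -- Part (b)
  have hv0 : vvec n ≠ 0 := by
    intro h
    have h2 : vvec n ⟨n-1, by omega⟩ = 0 := by rw [h]; rfl
    rw [show vvec n ⟨n-1, by omega⟩ = -2 from by simp [vvec]] at h2
    norm_num at h2
  refine ⟨reflIso (vvec n) hv0 (4 / ((n:ℝ)-1)), ?_⟩
  rw [Set.image_union]
  have h1 : reflIso (vvec n) hv0 (4 / ((n:ℝ)-1)) '' JohnsonRep' n = JohnsonRep' n := by
    have hfix : ∀ x ∈ JohnsonRep' n, reflIso (vvec n) hv0 (4 / ((n:ℝ)-1)) x = id x := by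
      rintro x ⟨i, j, hij, hjn, rfl⟩
      rw [id_eq, reflIso_apply]
      apply reflMap_fixed
      rw [inner_v_single]
      have hi' : (i:ℕ) < n - 1 := lt_trans hij hjn
      rw [show vvec n i = 2 / ((n:ℝ)-1) from by simp [vvec, hi'],
        show vvec n j = 2 / ((n:ℝ)-1) from by simp [vvec, hjn]]
      field_simp
      ring
    rw [Set.image_congr hfix, Set.image_id]
  have hkey : ∀ i : Fin n, (i:ℕ) < n - 1 →
      reflIso (vvec n) hv0 (4 / ((n:ℝ)-1)) (wvec n 1 i) = wvec n (-1) i := by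
    intro i hi
    rw [reflIso_apply, reflMap_eq_sub _ hv0 _ _ ?_, wvec_sub n hn i hi]
    rw [inner_vw n hn i hi, inner_vv n hn]
    field_simp
    ring
  have h2 : reflIso (vvec n) hv0 (4 / ((n:ℝ)-1)) '' X3set n 1 = X3set n (-1) := by
    ext y
    constructor
    · rintro ⟨x, hx, rfl⟩
      obtain ⟨i, hi, rfl⟩ := (X3_char n hn 1 _).1 hx
      rw [hkey i hi]
      exact (X3_char n hn (-1) _).2 ⟨i, hi, rfl⟩
    · intro hy
      obtain ⟨i, hi, rfl⟩ := (X3_char n hn (-1) _).1 hy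
      exact ⟨wvec n 1 i, (X3_char n hn 1 _).2 ⟨i, hi, rfl⟩, hkey i hi⟩
  rw [h1, h2, ha]
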